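/- Approximation lemma for large deviation lower bounds (Lemma 4.1, lower bound): Let (E, ρ) be a separable metric space, I a nonempty index set, (Ω, 𝓕, P) a probability space, and for each ν ∈ I and each t > 0 let L_t^ν and L̄_t^ν be Borel-measurable maps from Ω to E. Let λ : (0,∞) → (0,∞) satisfy λ(t) → ∞ as t → ∞, and let J : E → [0,∞] have compact level sets. Assume: (i) for every open set A ⊆ E, liminf_{t→∞} (1/λ(t)) · inf_{ν∈I} log P(L̄_t^ν ∈ A) ≥ −inf_{x∈A} J(x); and (ii) for every δ > 0, (1/λ(t)) · sup_{ν∈I} log P(ρ(L_t^ν, L̄_t^ν) > δ) → −∞ as t → ∞. Then for every open set A ⊆ E, liminf_{t→∞} (1/λ(t)) · inf_{ν∈I} log P(L_t^ν ∈ A) ≥ −inf_{x∈A} J(x). -/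

import Mathlib

open MeasureTheory Filter Set
open scoped ENNReal NNReal

/-- **Approximation lemma for LDP, lower bound** (Lemma 4.1 of the paper).
If the family `Lbar` satisfies the uniform large deviation lower bound with rate
function `J` (with compact level sets) and speed `lam t → ∞`, and `L` is
superexponentially close to `Lbar` uniformly in the index `ν`, then `L` satisfies
the same uniform large deviation lower bound. -/
theorem approximation_lemma_lower
    {E : Type*} [MetricSpace E] [TopologicalSpace.SeparableSpace E]
    [MeasurableSpace E] [BorelSpace E]
    {I : Type*} [Nonempty I]
    {Ω : Type*} [MeasurableSpace Ω] (P : Measure Ω) [IsProbabilityMeasure P]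
    (L Lbar : I → ℝ → Ω → E)
    (hL : ∀ ν : I, ∀ t > (0 : ℝ), Measurable (L ν t))
    (hLbar : ∀ ν : I, ∀ t > (0 : ℝ), Measurable (Lbar ν t))
    (lam : ℝ → ℝ) (hlam_pos : ∀ t > (0 : ℝ), 0 < lam t)
    (hlam : Tendsto lam atTop atTop)
    (J : E → ℝ≥0∞) (hJ : ∀ r : NNReal, IsCompact {x : E | J x ≤ r})
    -- (i) uniform lower bound for `Lbar`
    (hlower : ∀ A : Set E, IsOpen A →
      -(⨅ x ∈ A, (J x : EReal)) ≤
        liminf (fun t : ℝ =>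
          ((1 / lam t : ℝ) : EReal) *
            ⨅ ν : I, ENNReal.log (P {ω | Lbar ν t ω ∈ A})) atTop)
    -- (ii) superexponential approximation
    (happrox : ∀ δ > (0 : ℝ),
      Tendsto (fun t : ℝ =>
          ((1 / lam t : ℝ) : EReal) *
            ⨆ ν : I, ENNReal.log (P {ω | δ < dist (L ν t ω) (Lbar ν t ω)}))
        atTop (nhds (⊥ : EReal))) :
    ∀ A : Set E, IsOpen A →
      -(⨅ x ∈ A, (J x : EReal)) ≤
        liminf (fun t : ℝ =>
          ((1 / lam t : ℝ) : EReal) *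
            ⨅ ν : I, ENNReal.log (P {ω | L ν t ω ∈ A})) atTop := by
  intro A hA
  rw [le_liminf_iff]
  intro y hy
  -- find a point `x ∈ A` with `y < -(J x)`
  have h1 : (⨅ x ∈ A, (J x : EReal)) < -y := EReal.lt_neg_of_lt_neg hy
  obtain ⟨x, hx⟩ := iInf_lt_iff.mp h1
  obtain ⟨hxA, hx⟩ := iInf_lt_iff.mp hx
  have hyJ : y < -(J x : EReal) := EReal.lt_neg_of_lt_neg hx
  -- pick real numbers `y < m < m₁ < -(J x)`
  obtain ⟨m, hym, hm⟩ := EReal.exists_between_coe_real hyJ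
  obtain ⟨m₁, hmm₁, hm₁⟩ := EReal.exists_between_coe_real hm
  have hmm₁' : m < m₁ := by exact_mod_cast hmm₁
  set d : ℝ := m₁ - m with hd
  have hd0 : 0 < d := by simp only [hd]; linarith
  -- pick `δ` from the openness of `A`
  obtain ⟨ε, hε, hball⟩ := Metric.isOpen_iff.mp hA x hxA
  set δ : ℝ := ε / 3 with hδdef
  have hδ : 0 < δ := by positivity
  set B : Set E := Metric.ball x δ with hBdef
  have hxB : x ∈ B := Metric.mem_ball_self hδ
  -- the lower bound for `Lbar` on the ball `B`
  have hliminfB : (m₁ : EReal) < liminf (fun t : ℝ =>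
      ((1 / lam t : ℝ) : EReal) *
        ⨅ ν : I, ENNReal.log (P {ω | Lbar ν t ω ∈ B})) atTop := by
    refine lt_of_lt_of_le hm₁ (le_trans ?_ (hlower B Metric.isOpen_ball))
    exact EReal.neg_le_neg_iff.mpr (iInf₂_le x hxB)
  have EvB := eventually_lt_of_lt_liminf hliminfB
  have EvD := EReal.tendsto_nhds_bot_iff_real.mp (happrox δ hδ) (m₁ - 1)
  -- choice of a threshold `M` for `lam t`
  set M : ℝ := max ((Real.log 2 + 1) / d) (Real.log 2 + 1) with hMdef
  have hexpM : ∀ s : ℝ, M ≤ s → Real.exp (-(d * s)) + Real.exp (-s) < 1 := by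
    intro s hs
    have h2 : Real.log 2 + 1 ≤ s := le_trans (le_max_right _ _) hs
    have h3 : (Real.log 2 + 1) / d ≤ s := le_trans (le_max_left _ _) hs
    have h4 : Real.log 2 + 1 ≤ d * s := by
      rw [div_le_iff₀ hd0] at h3
      nlinarith
    have hl2 : 0 < Real.log 2 := Real.log_pos (by norm_num)
    have hhalf : Real.exp (-(Real.log 2)) = 1 / 2 := by
      rw [Real.exp_neg, Real.exp_log (by norm_num : (0:ℝ) < 2)]
      norm_num
    have e1 : Real.exp (-(d * s)) < 1 / 2 := by
      rw [← hhalf]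
      exact Real.exp_lt_exp.mpr (by linarith)
    have e2 : Real.exp (-s) < 1 / 2 := by
      rw [← hhalf]
      exact Real.exp_lt_exp.mpr (by linarith)
    linarith
  have EvM : ∀ᶠ t : ℝ in atTop, M ≤ lam t := hlam.eventually (eventually_ge_atTop M)
  have Ev0 : ∀ᶠ t : ℝ in atTop, (0 : ℝ) < t := eventually_gt_atTop 0
  filter_upwards [EvB, EvD, EvM, Ev0] with t hBt hDt hMt ht0
  set lt : ℝ := lam t with hltdef
  have hlt : 0 < lt := hlam_pos t ht0
  have hltE : (0 : EReal) < (lt : EReal) := by exact_mod_cast hlt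
  have hltT : (lt : EReal) ≠ ⊤ := EReal.coe_ne_top lt
  have hdiv : ∀ z : EReal, ((1 / lt : ℝ) : EReal) * z = z / (lt : EReal) := by
    intro z
    rw [one_div, EReal.coe_inv, mul_comm]
    rfl
  rw [hdiv] at hBt hDt ⊢
  -- per-index bounds on the measures
  have hB2 : ((m₁ * lt : ℝ) : EReal) ≤
      ⨅ ν : I, ENNReal.log (P {ω | Lbar ν t ω ∈ B}) := by
    rw [EReal.coe_mul]
    exact (EReal.le_div_iff_mul_le hltE hltT).mp hBt.le
  have hD2 : (⨆ ν : I, ENNReal.log (P {ω | δ < dist (L ν t ω) (Lbar ν t ω)})) ≤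
      ((lt * (m₁ - 1) : ℝ) : EReal) := by
    rw [EReal.coe_mul]
    exact (EReal.div_le_iff_le_mul hltE hltT).mp hDt.le
  -- main estimate, for each index ν
  have hmain : ∀ ν : I, ((m * lt : ℝ) : EReal) ≤ ENNReal.log (P {ω | L ν t ω ∈ A}) := by
    intro ν
    have hsub : {ω | Lbar ν t ω ∈ B} ⊆
        {ω | L ν t ω ∈ A} ∪ {ω | δ < dist (L ν t ω) (Lbar ν t ω)} := by
      intro ω hω
      by_cases hdist : δ < dist (L ν t ω) (Lbar ν t ω)
      · exact Or.inr hdist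
      · push_neg at hdist
        left
        apply hball
        have h1 : dist (Lbar ν t ω) x < δ := hω
        have h2 : dist (L ν t ω) x ≤ dist (L ν t ω) (Lbar ν t ω) + dist (Lbar ν t ω) x :=
          dist_triangle _ _ _
        have : dist (L ν t ω) x < ε := by
          simp only [hδdef] at hdist h1
          linarith
        exact Metric.mem_ball.mpr this
    have hXZ : P {ω | Lbar ν t ω ∈ B} ≤
        P {ω | L ν t ω ∈ A} + P {ω | δ < dist (L ν t ω) (Lbar ν t ω)} :=
      le_trans (measure_mono hsub) (measure_union_le _ _)
    have hX : EReal.exp ((m₁ * lt : ℝ)) ≤ P {ω | Lbar ν t ω ∈ B} := by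
      have h := le_trans hB2 (iInf_le _ ν)
      calc EReal.exp ((m₁ * lt : ℝ))
          ≤ EReal.exp (ENNReal.log (P {ω | Lbar ν t ω ∈ B})) := EReal.exp_monotone h
        _ = P {ω | Lbar ν t ω ∈ B} := ENNReal.exp_log _
    have hY : P {ω | δ < dist (L ν t ω) (Lbar ν t ω)} ≤ EReal.exp ((lt * (m₁ - 1) : ℝ)) := by
      have h := le_trans (le_iSup _ ν) hD2
      calc P {ω | δ < dist (L ν t ω) (Lbar ν t ω)}
          = EReal.exp (ENNReal.log (P {ω | δ < dist (L ν t ω) (Lbar ν t ω)})) :=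
            (ENNReal.exp_log _).symm
        _ ≤ EReal.exp ((lt * (m₁ - 1) : ℝ)) := EReal.exp_monotone h
    have hkey : EReal.exp ((m * lt : ℝ)) + EReal.exp ((lt * (m₁ - 1) : ℝ)) ≤
        EReal.exp ((m₁ * lt : ℝ)) := by
      have e1 : ((m * lt : ℝ) : EReal) = ((m₁ * lt : ℝ) : EReal) + ((-(d * lt) : ℝ) : EReal) := by
        rw [← EReal.coe_add]
        norm_cast
        simp only [hd]
        ring
      have e2 : ((lt * (m₁ - 1) : ℝ) : EReal) = ((m₁ * lt : ℝ) : EReal) + ((-lt : ℝ) : EReal) := by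
        rw [← EReal.coe_add]
        norm_cast
        ring
      rw [e1, e2, EReal.exp_add, EReal.exp_add, ← mul_add]
      have hsum : EReal.exp ((-(d * lt) : ℝ)) + EReal.exp ((-lt : ℝ)) ≤ 1 := by
        rw [EReal.exp_coe, EReal.exp_coe,
          ← ENNReal.ofReal_add (Real.exp_nonneg _) (Real.exp_nonneg _)]
        exact ENNReal.ofReal_le_one.mpr (hexpM lt hMt).le
      calc EReal.exp ((m₁ * lt : ℝ)) * (EReal.exp ((-(d * lt) : ℝ)) + EReal.exp ((-lt : ℝ)))
          ≤ EReal.exp ((m₁ * lt : ℝ)) * 1 := mul_le_mul_right hsum _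
        _ = EReal.exp ((m₁ * lt : ℝ)) := mul_one _
    have hZ : EReal.exp ((m * lt : ℝ)) ≤ P {ω | L ν t ω ∈ A} := by
      have h5 : EReal.exp ((m * lt : ℝ)) + P {ω | δ < dist (L ν t ω) (Lbar ν t ω)} ≤
          P {ω | L ν t ω ∈ A} + P {ω | δ < dist (L ν t ω) (Lbar ν t ω)} :=
        le_trans (add_le_add_right hY _) (le_trans (le_trans hkey hX) hXZ)
      exact ENNReal.le_of_add_le_add_right (measure_ne_top P _) h5
    calc ((m * lt : ℝ) : EReal)
        = ENNReal.log (EReal.exp ((m * lt : ℝ))) := (EReal.log_exp _).symm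
      _ ≤ ENNReal.log (P {ω | L ν t ω ∈ A}) := ENNReal.log_monotone hZ
  have hfin : (m : EReal) ≤ (⨅ ν : I, ENNReal.log (P {ω | L ν t ω ∈ A})) / (lt : EReal) := by
    rw [EReal.le_div_iff_mul_le hltE hltT, ← EReal.coe_mul]
    exact le_iInf hmain
  exact lt_of_lt_of_le hym hfin
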